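/- Let f(x) = x/|x|² be the inversion in the unit sphere of ℝⁿ, extended to ℝⁿ ∪ {∞} by f(0) = ∞ and f(∞) = 0. Then f is an isometry with respect to the chordal metric: q(f(x), f(y)) = q(x, y) for all x, y. -/

import Mathlib

/-- The chordal metric on `ℝⁿ ∪ {∞}`, with `∞` modelled by `none`. -/
noncomputable def chordal {n : ℕ} (x y : Option (EuclideanSpace ℝ (Fin n))) : ℝ :=
  match x, y with
  | some a, some b => ‖a - b‖ / (Real.sqrt (1 + ‖a‖ ^ 2) * Real.sqrt (1 + ‖b‖ ^ 2))
  | some a, none => 1 / Real.sqrt (1 + ‖a‖ ^ 2)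
  | none, some b => 1 / Real.sqrt (1 + ‖b‖ ^ 2)
  | none, none => 0

open scoped Classical in
/-- The inversion `x ↦ x/‖x‖²` in the unit sphere, extended by `0 ↦ ∞`, `∞ ↦ 0`. -/
noncomputable def sphereInversion {n : ℕ} (x : Option (EuclideanSpace ℝ (Fin n))) :
    Option (EuclideanSpace ℝ (Fin n)) :=
  match x with
  | none => some 0
  | some a => if a = 0 then none else some ((‖a‖ ^ 2)⁻¹ • a)

open scoped RealInnerProductSpace


variable {n : ℕ}

lemma inv_norm_eq (a : EuclideanSpace ℝ (Fin n)) (ha : a ≠ 0) :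
    ‖(‖a‖ ^ 2)⁻¹ • a‖ = ‖a‖⁻¹ := by
  have h : ‖a‖ ≠ 0 := norm_ne_zero_iff.mpr ha
  rw [norm_smul, norm_inv, norm_pow, norm_norm]
  field_simp

lemma sqrt_one_add_inv (a : EuclideanSpace ℝ (Fin n)) (ha : a ≠ 0) :
    Real.sqrt (1 + ‖(‖a‖ ^ 2)⁻¹ • a‖ ^ 2) = Real.sqrt (1 + ‖a‖ ^ 2) / ‖a‖ := by
  have h : ‖a‖ ≠ 0 := norm_ne_zero_iff.mpr ha
  have h0 : (0:ℝ) < ‖a‖ := lt_of_le_of_ne (norm_nonneg a) (Ne.symm h)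
  rw [inv_norm_eq a ha]
  have : 1 + (‖a‖⁻¹) ^ 2 = (1 + ‖a‖ ^ 2) / ‖a‖ ^ 2 := by field_simp; ring
  rw [this, Real.sqrt_div (by positivity), Real.sqrt_sq h0.le]

lemma inv_sub_norm (a b : EuclideanSpace ℝ (Fin n)) (ha : a ≠ 0) (hb : b ≠ 0) :
    ‖(‖a‖ ^ 2)⁻¹ • a - (‖b‖ ^ 2)⁻¹ • b‖ = ‖a - b‖ / (‖a‖ * ‖b‖) := by
  have hna : ‖a‖ ≠ 0 := norm_ne_zero_iff.mpr ha
  have hnb : ‖b‖ ≠ 0 := norm_ne_zero_iff.mpr hb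
  have key : ‖(‖a‖ ^ 2)⁻¹ • a - (‖b‖ ^ 2)⁻¹ • b‖ ^ 2 = (‖a - b‖ / (‖a‖ * ‖b‖)) ^ 2 := by
    rw [div_pow, mul_pow]
    rw [norm_sub_sq_real, norm_sub_sq_real]
    rw [norm_smul, norm_smul, real_inner_smul_left, real_inner_smul_right]
    rw [norm_inv, norm_pow, norm_norm, norm_inv, norm_pow, norm_norm]
    field_simp
    ring
  have h1 := congrArg Real.sqrt key
  rwa [Real.sqrt_sq (norm_nonneg _), Real.sqrt_sq (by positivity)] at h1

/-- The inversion in the unit sphere is an isometry for the chordal metric. -/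
theorem stmt7 (n : ℕ) (x y : Option (EuclideanSpace ℝ (Fin n))) :
    chordal (sphereInversion x) (sphereInversion y) = chordal x y := by
  have sq_pos : ∀ a : EuclideanSpace ℝ (Fin n), (0:ℝ) < Real.sqrt (1 + ‖a‖ ^ 2) := fun a =>
    Real.sqrt_pos.mpr (by positivity)
  rcases x with _ | a <;> rcases y with _ | b
  · simp [chordal, sphereInversion]
  · by_cases hb : b = 0
    · simp [chordal, sphereInversion, hb]
    · have hnb : ‖b‖ ≠ 0 := norm_ne_zero_iff.mpr hb
      simp only [chordal, sphereInversion, if_neg hb]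
      rw [zero_sub, norm_neg, sqrt_one_add_inv b hb, inv_norm_eq b hb]
      rw [norm_zero]
      field_simp
      norm_num
  · by_cases ha : a = 0
    · simp [chordal, sphereInversion, ha]
    · have hna : ‖a‖ ≠ 0 := norm_ne_zero_iff.mpr ha
      simp only [chordal, sphereInversion, if_neg ha]
      rw [sqrt_one_add_inv a ha, sub_zero, inv_norm_eq a ha]
      rw [norm_zero]
      field_simp
      norm_num
  · by_cases ha : a = 0
    · by_cases hb : b = 0
      · simp [chordal, sphereInversion, ha, hb]
      · have hnb : ‖b‖ ≠ 0 := norm_ne_zero_iff.mpr hb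
        simp only [chordal, sphereInversion, if_pos ha, if_neg hb, ha, reduceIte]
        rw [sqrt_one_add_inv b hb, zero_sub, norm_neg, norm_zero]
        field_simp
        norm_num
    · by_cases hb : b = 0
      · have hna : ‖a‖ ≠ 0 := norm_ne_zero_iff.mpr ha
        simp only [chordal, sphereInversion, if_neg ha, if_pos hb, hb, reduceIte]
        rw [sqrt_one_add_inv a ha, sub_zero, norm_zero]
        field_simp
        norm_num
      · have hna : ‖a‖ ≠ 0 := norm_ne_zero_iff.mpr ha
        have hnb : ‖b‖ ≠ 0 := norm_ne_zero_iff.mpr hb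
        simp only [chordal, sphereInversion, if_neg ha, if_neg hb]
        rw [inv_sub_norm a b ha hb, sqrt_one_add_inv a ha, sqrt_one_add_inv b hb]
        rw [div_mul_div_comm]
        rw [div_div_div_cancel_right₀]
        positivity
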